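/- Let 1 < p ≤ q < ∞, s > 0, and f = 𝐏_s the Poisson kernel on ℝ. Then for x ≥ 6s, (∫_{x/3−s}^{x/2−s} |t ∂_t 𝐏_t(f)(x)|^q dt/t)^{1/q} ≥ c/x for an absolute constant c > 0, and consequently ‖G_q^𝐏(f)‖_{L_p(ℝ)} ≥ c' (p−1)^{-1} s^{−1/p'} while ‖f‖_{L_p(ℝ)} ≤ C s^{−1/p'}; hence the best constant L in ‖G_q^𝐏(f)‖_{L_p} ≤ L‖f‖_{L_p} over all f ∈ L_p(ℝ) satisfies L ≳ p' as p → 1. -/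

import Mathlib

open MeasureTheory Set

/-- The Poisson kernel `𝐏_t(x) = π⁻¹ t/(x²+t²)` on `ℝ`. -/
noncomputable def pK (t x : ℝ) : ℝ := t / (Real.pi * (x ^ 2 + t ^ 2))

/-- The Poisson integral `𝐏_t * h`. -/
noncomputable def pconv (t : ℝ) (h : ℝ → ℝ) (x : ℝ) : ℝ := ∫ y : ℝ, pK t (x - y) * h y

/-- `t ∂_t (𝐏_t * h)(x)`. -/
noncomputable def ptD (t : ℝ) (h : ℝ → ℝ) (x : ℝ) : ℝ :=
  t * deriv (fun u : ℝ => pconv u h x) t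

/-- The Littlewood–Paley `g`-function `G_q^𝐏 h (x) = (∫_0^∞ |t∂_t(𝐏_t*h)(x)|^q dt/t)^{1/q}`. -/
noncomputable def pG (q : ℝ) (h : ℝ → ℝ) (x : ℝ) : ℝ :=
  (∫ t in Ioi (0 : ℝ), |ptD t h x| ^ q / t) ^ (1 / q)

/-- The `L_p(ℝ)` norm `(∫ |h|^p)^{1/p}`. -/
noncomputable def lpN (p : ℝ) (h : ℝ → ℝ) : ℝ := (∫ x : ℝ, |h x| ^ p) ^ (1 / p)

/-- The conjugate index `p' = p/(p-1)`. -/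
noncomputable def pconj (p : ℝ) : ℝ := p / (p - 1)
open Filter Topology

lemma pK_pos {t : ℝ} (ht : 0 < t) (x : ℝ) : 0 < pK t x := by
  unfold pK; positivity

lemma pK_cont {t : ℝ} (ht : 0 < t) : Continuous (pK t) := by
  unfold pK
  exact continuous_const.div (by fun_prop) (fun x => by positivity)

lemma pK_le {t : ℝ} (ht : 0 < t) (x : ℝ) : pK t x ≤ 1 / (Real.pi * t) := by
  unfold pK
  rw [div_le_div_iff₀ (by positivity) (by positivity)]
  have : t ^ 2 ≤ x ^ 2 + t ^ 2 := by nlinarith [sq_nonneg x]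
  nlinarith [Real.pi_pos]

lemma integrable_pK {t : ℝ} (ht : 0 < t) : Integrable (pK t) := by
  have h : pK t = fun x : ℝ => (1 + (x / t) ^ 2)⁻¹ * (Real.pi * t)⁻¹ := by
    funext x
    unfold pK
    field_simp
    ring
  rw [h]
  exact (integrable_inv_one_add_sq.comp_div ht.ne').mul_const _

lemma integrable_pK_mul {t s : ℝ} (ht : 0 < t) (hs : 0 < s) (x : ℝ) :
    Integrable (fun y => pK t (x - y) * pK s y) := by
  refine Integrable.mono' (((integrable_pK ht).comp_sub_left x).mul_const (1 / (Real.pi * s)))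
    ?_ ?_
  · exact (((pK_cont ht).comp (continuous_const.sub continuous_id)).mul (pK_cont hs)).aestronglyMeasurable
  · refine Filter.Eventually.of_forall fun y => ?_
    rw [Real.norm_eq_abs, abs_of_nonneg (mul_nonneg (pK_pos ht _).le (pK_pos hs _).le)]
    exact mul_le_mul_of_nonneg_left (pK_le hs y) (pK_pos ht (x - y)).le

/-- Helper: limit of `(y²+s²)/((x−y)²+t²)` along a filter where `y⁻¹ → 0`. -/
lemma tendsto_ratio_one {s t x : ℝ} (hs : 0 < s) (ht : 0 < t) {l : Filter ℝ}
    (hinv : Tendsto (fun y : ℝ => y⁻¹) l (𝓝 0)) (hne : ∀ᶠ y in l, y ≠ 0) :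
    Tendsto (fun y => (y ^ 2 + s ^ 2) / ((x - y) ^ 2 + t ^ 2)) l (𝓝 1) := by
  have hc : ContinuousAt (fun u : ℝ => (1 + (s * u) ^ 2) / ((x * u - 1) ^ 2 + (t * u) ^ 2)) 0 := by
    apply ContinuousAt.div (by fun_prop) (by fun_prop)
    norm_num
  have h0 : (fun u : ℝ => (1 + (s * u) ^ 2) / ((x * u - 1) ^ 2 + (t * u) ^ 2)) 0 = 1 := by
    norm_num
  have hT : Tendsto (fun u : ℝ => (1 + (s * u) ^ 2) / ((x * u - 1) ^ 2 + (t * u) ^ 2)) (𝓝 0) (𝓝 1) := by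
    have := hc.tendsto
    simpa using this
  refine (hT.comp hinv).congr' ?_
  filter_upwards [hne] with y hy
  have hy2 : y ^ 2 ≠ 0 := pow_ne_zero _ hy
  have hden : (x - y) ^ 2 + t ^ 2 ≠ 0 := by positivity
  have hden2 : (x * y⁻¹ - 1) ^ 2 + (t * y⁻¹) ^ 2 ≠ 0 := by
    have : (x * y⁻¹ - 1) ^ 2 + (t * y⁻¹) ^ 2 = (((x - y) ^ 2 + t ^ 2)) / y ^ 2 := by
      field_simp
    rw [this]
    positivity
  show (1 + (s * y⁻¹) ^ 2) / ((x * y⁻¹ - 1) ^ 2 + (t * y⁻¹) ^ 2) = _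
  field_simp

/-- Helper: limit of `y/(y²+s²)` along a filter where `y⁻¹ → 0`. -/
lemma tendsto_self_div {s : ℝ} (hs : 0 < s) {l : Filter ℝ}
    (hinv : Tendsto (fun y : ℝ => y⁻¹) l (𝓝 0)) (hne : ∀ᶠ y in l, y ≠ 0) :
    Tendsto (fun y => y / (y ^ 2 + s ^ 2)) l (𝓝 0) := by
  have hc : ContinuousAt (fun u : ℝ => u / (1 + (s * u) ^ 2)) 0 := by
    apply ContinuousAt.div (by fun_prop) (by fun_prop)
    norm_num
  have hT : Tendsto (fun u : ℝ => u / (1 + (s * u) ^ 2)) (𝓝 0) (𝓝 0) := by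
    have := hc.tendsto
    simpa using this
  refine (hT.comp hinv).congr' ?_
  filter_upwards [hne] with y hy
  have hden : y ^ 2 + s ^ 2 ≠ 0 := by positivity
  show y⁻¹ / (1 + (s * y⁻¹) ^ 2) = y / (y ^ 2 + s ^ 2)
  field_simp
lemma tendsto_inv_atBot_zero' : Tendsto (fun y : ℝ => y⁻¹) atBot (𝓝 0) := by
  have h := (tendsto_inv_atTop_zero (𝕜 := ℝ)).comp tendsto_neg_atBot_atTop
  have h2 := h.neg
  simp only [neg_zero] at h2
  refine h2.congr fun y => ?_
  simp [Function.comp_def, inv_neg]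

lemma tendsto_arctan_affine_top {c : ℝ} (hc : 0 < c) (x : ℝ) :
    Tendsto (fun y : ℝ => Real.arctan ((y - x) / c)) atTop (𝓝 (Real.pi / 2)) := by
  apply (tendsto_nhds_of_tendsto_nhdsWithin Real.tendsto_arctan_atTop).comp
  apply Tendsto.atTop_div_const hc
  apply (tendsto_atTop_add_const_right atTop (-x) tendsto_id).congr
  intro y; show id y + -x = y - x; simp [sub_eq_add_neg]

lemma tendsto_arctan_affine_bot {c : ℝ} (hc : 0 < c) (x : ℝ) :
    Tendsto (fun y : ℝ => Real.arctan ((y - x) / c)) atBot (𝓝 (-(Real.pi / 2))) := by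
  apply (tendsto_nhds_of_tendsto_nhdsWithin Real.tendsto_arctan_atBot).comp
  apply Tendsto.atBot_div_const hc
  apply (tendsto_atBot_add_const_right atBot (-x) tendsto_id).congr
  intro y; show id y + -x = y - x; simp [sub_eq_add_neg]
set_option maxHeartbeats 2000000 in
lemma pconv_pK {t s : ℝ} (ht : 0 < t) (hs : 0 < s) (x : ℝ) :
    pconv t (pK s) x = pK (t + s) x := by
  have hπ : (0:ℝ) < Real.pi := Real.pi_pos
  rcases eq_or_ne ((x ^ 2 + (t + s) ^ 2) * (x ^ 2 + (t - s) ^ 2)) 0 with hΔ | hΔ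
  · -- degenerate case: x = 0, t = s
    have h1 : 0 < x ^ 2 + (t + s) ^ 2 := by positivity
    have h2 : x ^ 2 + (t - s) ^ 2 = 0 := by
      rcases mul_eq_zero.mp hΔ with h | h
      · exact absurd h h1.ne'
      · exact h
    have hx : x = 0 := by nlinarith [sq_nonneg x, sq_nonneg (t - s)]
    have hts : t = s := by nlinarith [sq_nonneg x, sq_nonneg (t - s)]
    subst hx hts
    set G : ℝ → ℝ := fun y => t ^ 2 / Real.pi ^ 2 *
      (y / (2 * t ^ 2 * (y ^ 2 + t ^ 2)) + Real.arctan ((y - 0) / t) / (2 * t ^ 3)) with hG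
    have hderiv : ∀ y, HasDerivAt G (pK t (0 - y) * pK t y) y := by
      intro y
      have hden : (0:ℝ) < y ^ 2 + t ^ 2 := by positivity
      have hsq : HasDerivAt (fun y : ℝ => 2 * t ^ 2 * (y ^ 2 + t ^ 2)) (2 * t ^ 2 * (2 * y)) y := by
        have h : HasDerivAt (fun y : ℝ => y ^ 2 + t ^ 2) (2 * y) y := by
          simpa using (hasDerivAt_pow 2 y).add_const (t ^ 2)
        exact h.const_mul _
      have h1 : HasDerivAt (fun y : ℝ => y / (2 * t ^ 2 * (y ^ 2 + t ^ 2)))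
          ((1 * (2 * t ^ 2 * (y ^ 2 + t ^ 2)) - y * (2 * t ^ 2 * (2 * y))) /
            (2 * t ^ 2 * (y ^ 2 + t ^ 2)) ^ 2) y :=
        (hasDerivAt_id y).div hsq (by positivity)
      have h2 : HasDerivAt (fun y : ℝ => Real.arctan ((y - 0) / t) / (2 * t ^ 3))
          ((1 / (1 + ((y - 0) / t) ^ 2) * (1 / t)) / (2 * t ^ 3)) y :=
        (((Real.hasDerivAt_arctan ((y - 0) / t)).comp y
          (((hasDerivAt_id y).sub_const 0).div_const t)).div_const _)
      have combo := (h1.add h2).const_mul (t ^ 2 / Real.pi ^ 2)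
      refine combo.congr_deriv ?_
      have e1 : (1:ℝ) + ((y - 0) / t) ^ 2 ≠ 0 := by positivity
      simp only [pK]
      field_simp
      ring
    have hbot : Tendsto G atBot (𝓝 (t ^ 2 / Real.pi ^ 2 *
        ((1 / (2 * t ^ 2)) * 0 + (-(Real.pi / 2)) / (2 * t ^ 3)))) := by
      apply Tendsto.const_mul
      apply Tendsto.add
      · refine (Tendsto.const_mul (1 / (2 * t ^ 2))
          (tendsto_self_div ht tendsto_inv_atBot_zero' (eventually_ne_atBot 0))).congr fun y => ?_
        have : y ^ 2 + t ^ 2 ≠ 0 := by positivity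
        field_simp
      · exact (tendsto_arctan_affine_bot ht 0).div_const _
    have htop : Tendsto G atTop (𝓝 (t ^ 2 / Real.pi ^ 2 *
        ((1 / (2 * t ^ 2)) * 0 + (Real.pi / 2) / (2 * t ^ 3)))) := by
      apply Tendsto.const_mul
      apply Tendsto.add
      · refine (Tendsto.const_mul (1 / (2 * t ^ 2))
          (tendsto_self_div ht tendsto_inv_atTop_zero (eventually_ne_atTop 0))).congr fun y => ?_
        have : y ^ 2 + t ^ 2 ≠ 0 := by positivity
        field_simp
      · exact (tendsto_arctan_affine_top ht 0).div_const _
    have key := MeasureTheory.integral_of_hasDerivAt_of_tendsto hderiv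
      (integrable_pK_mul ht ht 0) hbot htop
    unfold pconv
    rw [key]
    simp only [pK]
    field_simp
    ring
  · -- generic case
    have h1 : (0:ℝ) < x ^ 2 + (t + s) ^ 2 := by positivity
    have h2' : (0:ℝ) ≤ x ^ 2 + (t - s) ^ 2 := by positivity
    have h2 : (0:ℝ) < x ^ 2 + (t - s) ^ 2 := by
      rcases h2'.lt_or_eq with h | h
      · exact h
      · exact absurd (by rw [← h]; ring) hΔ
    set Δ : ℝ := (x ^ 2 + (t + s) ^ 2) * (x ^ 2 + (t - s) ^ 2) with hΔdef
    have hΔpos : 0 < Δ := mul_pos h1 h2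
    set a : ℝ := 2 * x / Δ with ha
    set b : ℝ := (x ^ 2 - t ^ 2 + s ^ 2) / Δ with hb
    set d : ℝ := (x ^ 2 + t ^ 2 - s ^ 2) / Δ with hd
    set F : ℝ → ℝ := fun y => t * s / Real.pi ^ 2 *
      (a / 2 * Real.log (y ^ 2 + s ^ 2) - a / 2 * Real.log ((x - y) ^ 2 + t ^ 2)
        + d / s * Real.arctan ((y - 0) / s) + b / t * Real.arctan ((y - x) / t)) with hF
    have hderiv : ∀ y, HasDerivAt F (pK t (x - y) * pK s y) y := by
      intro y
      have hden1 : (0:ℝ) < y ^ 2 + s ^ 2 := by positivity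
      have hden2 : (0:ℝ) < (x - y) ^ 2 + t ^ 2 := by positivity
      have hlog1 : HasDerivAt (fun y : ℝ => Real.log (y ^ 2 + s ^ 2))
          (2 * y / (y ^ 2 + s ^ 2)) y := by
        have h : HasDerivAt (fun y : ℝ => y ^ 2 + s ^ 2) (2 * y) y := by
          simpa using (hasDerivAt_pow 2 y).add_const (s ^ 2)
        simpa using h.log hden1.ne'
      have hlog2 : HasDerivAt (fun y : ℝ => Real.log ((x - y) ^ 2 + t ^ 2))
          (2 * (x - y) * (-1) / ((x - y) ^ 2 + t ^ 2)) y := by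
        have h : HasDerivAt (fun y : ℝ => (x - y) ^ 2 + t ^ 2) (2 * (x - y) * (-1)) y := by
          have := (((hasDerivAt_id y).const_sub x).pow 2).add_const (t ^ 2)
          simpa using this
        simpa using h.log hden2.ne'
      have harc1 : HasDerivAt (fun y : ℝ => Real.arctan ((y - 0) / s))
          (1 / (1 + ((y - 0) / s) ^ 2) * (1 / s)) y :=
        by have h := (Real.hasDerivAt_arctan ((y - 0) / s)).comp y (((hasDerivAt_id y).sub_const 0).div_const s); exact h
      have harc2 : HasDerivAt (fun y : ℝ => Real.arctan ((y - x) / t))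
          (1 / (1 + ((y - x) / t) ^ 2) * (1 / t)) y :=
        by have h := (Real.hasDerivAt_arctan ((y - x) / t)).comp y (((hasDerivAt_id y).sub_const x).div_const t); exact h
      have combo := ((((hlog1.const_mul (a / 2)).sub (hlog2.const_mul (a / 2))).add
        (harc1.const_mul (d / s))).add (harc2.const_mul (b / t))).const_mul (t * s / Real.pi ^ 2)
      refine combo.congr_deriv ?_
      have e1 : (1:ℝ) + ((y - 0) / s) ^ 2 ≠ 0 := by positivity
      have e2 : (1:ℝ) + ((y - x) / t) ^ 2 ≠ 0 := by positivity
      simp only [pK, ha, hb, hd, hΔdef]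
      field_simp
      ring
    have hlograt_top : Tendsto (fun y : ℝ =>
        a / 2 * (Real.log (y ^ 2 + s ^ 2) - Real.log ((x - y) ^ 2 + t ^ 2))) atTop (𝓝 (a / 2 * 0)) := by
      apply Tendsto.const_mul
      have hr := tendsto_ratio_one hs ht (tendsto_inv_atTop_zero) (eventually_ne_atTop 0) (x := x)
      have hlog := ((Real.continuousAt_log one_ne_zero).tendsto).comp hr
      rw [Real.log_one] at hlog
      refine hlog.congr fun y => ?_
      simp only [Function.comp_def]
      rw [Real.log_div (by positivity) (by positivity)]
    have hlograt_bot : Tendsto (fun y : ℝ =>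
        a / 2 * (Real.log (y ^ 2 + s ^ 2) - Real.log ((x - y) ^ 2 + t ^ 2))) atBot (𝓝 (a / 2 * 0)) := by
      apply Tendsto.const_mul
      have hr := tendsto_ratio_one hs ht tendsto_inv_atBot_zero' (eventually_ne_atBot 0) (x := x)
      have hlog := ((Real.continuousAt_log one_ne_zero).tendsto).comp hr
      rw [Real.log_one] at hlog
      refine hlog.congr fun y => ?_
      simp only [Function.comp_def]
      rw [Real.log_div (by positivity) (by positivity)]
    have htop : Tendsto F atTop (𝓝 (t * s / Real.pi ^ 2 *
        ((a / 2 * 0 + d / s * (Real.pi / 2)) + b / t * (Real.pi / 2)))) := by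
      refine (Tendsto.const_mul _ ((hlograt_top.add
        (((tendsto_arctan_affine_top hs 0).const_mul (d / s)))).add
        ((tendsto_arctan_affine_top ht x).const_mul (b / t)))).congr fun y => ?_
      simp only [hF]; ring
    have hbot : Tendsto F atBot (𝓝 (t * s / Real.pi ^ 2 *
        ((a / 2 * 0 + d / s * (-(Real.pi / 2))) + b / t * (-(Real.pi / 2))))) := by
      refine (Tendsto.const_mul _ ((hlograt_bot.add
        (((tendsto_arctan_affine_bot hs 0).const_mul (d / s)))).add
        ((tendsto_arctan_affine_bot ht x).const_mul (b / t)))).congr fun y => ?_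
      simp only [hF]; ring
    have key := MeasureTheory.integral_of_hasDerivAt_of_tendsto hderiv
      (integrable_pK_mul ht hs x) hbot htop
    unfold pconv
    rw [key]
    simp only [pK, ha, hb, hd, hΔdef]
    field_simp
    ring
/-- The explicit formula for `t ∂ₜ 𝐏_{t+s}(x)`. -/
noncomputable def pE (s t x : ℝ) : ℝ :=
  t * (x ^ 2 - (t + s) ^ 2) / (Real.pi * (x ^ 2 + (t + s) ^ 2) ^ 2)

lemma ptD_pK {s t : ℝ} (hs : 0 < s) (ht : 0 < t) (x : ℝ) :
    ptD t (pK s) x = pE s t x := by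
  have hπ : (0:ℝ) < Real.pi := Real.pi_pos
  unfold ptD pE
  have hev : (fun u : ℝ => pconv u (pK s) x) =ᶠ[𝓝 t] (fun u => pK (u + s) x) := by
    filter_upwards [isOpen_Ioi.mem_nhds ht] with u hu using pconv_pK hu hs x
  rw [hev.deriv_eq]
  have hden0 : (0:ℝ) < Real.pi * (x ^ 2 + (t + s) ^ 2) := by positivity
  have hnum : HasDerivAt (fun u : ℝ => u + s) 1 t := (hasDerivAt_id t).add_const s
  have hden : HasDerivAt (fun u : ℝ => Real.pi * (x ^ 2 + (u + s) ^ 2))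
      (Real.pi * (2 * (t + s))) t := by
    have h0 : HasDerivAt (fun u : ℝ => x ^ 2 + (u + s) ^ 2) (2 * (t + s)) t := by
      have := (((hasDerivAt_id t).add_const s).pow 2).const_add (x ^ 2)
      simpa using this
    exact h0.const_mul _
  have hD := hnum.div hden hden0.ne'
  have hD' : HasDerivAt (fun u : ℝ => pK (u + s) x)
      ((1 * (Real.pi * (x ^ 2 + (t + s) ^ 2)) - (t + s) * (Real.pi * (2 * (t + s)))) /
        (Real.pi * (x ^ 2 + (t + s) ^ 2)) ^ 2) t := by
    simp only [pK]; exact hD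
  rw [hD'.deriv]
  rw [mul_div_assoc', div_eq_div_iff (by positivity) (by positivity)]
  ring

lemma pE_abs_le {s t x : ℝ} (hs : 0 < s) (ht : 0 < t) :
    |pE s t x| ≤ t / (Real.pi * ((x ^ 2 + s ^ 2) + t ^ 2)) := by
  have hπ : (0:ℝ) < Real.pi := Real.pi_pos
  have hr : s ^ 2 + t ^ 2 ≤ (t + s) ^ 2 := by nlinarith
  have hden : (0:ℝ) < Real.pi * (x ^ 2 + (t + s) ^ 2) ^ 2 := by positivity
  have h1 : |pE s t x| = t * |x ^ 2 - (t + s) ^ 2| / (Real.pi * (x ^ 2 + (t + s) ^ 2) ^ 2) := by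
    unfold pE
    rw [abs_div, abs_mul, abs_of_pos ht, abs_of_pos hden]
  rw [h1, div_le_div_iff₀ hden (by positivity)]
  have hA : |x ^ 2 - (t + s) ^ 2| ≤ x ^ 2 + (t + s) ^ 2 :=
    abs_le.mpr ⟨by nlinarith, by nlinarith⟩
  have hx2 : (0:ℝ) < x ^ 2 + (t + s) ^ 2 := by positivity
  have habs : (0:ℝ) ≤ |x ^ 2 - (t + s) ^ 2| := abs_nonneg _
  have hsum : x ^ 2 + s ^ 2 + t ^ 2 ≤ x ^ 2 + (t + s) ^ 2 := by nlinarith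
  have key : |x ^ 2 - (t + s) ^ 2| * (x ^ 2 + s ^ 2 + t ^ 2) ≤
      (x ^ 2 + (t + s) ^ 2) * (x ^ 2 + (t + s) ^ 2) := mul_le_mul hA hsum (by positivity) hx2.le
  nlinarith [mul_le_mul_of_nonneg_left key (mul_nonneg ht.le hπ.le)]

lemma pE_contx {s t : ℝ} (hs : 0 < s) (ht : 0 < t) : Continuous (fun x => pE s t x) := by
  unfold pE
  exact (continuous_const.mul (by fun_prop)).div (by fun_prop) (fun x => by positivity)

lemma pE_contt {s x : ℝ} (hs : 0 < s) : ContinuousOn (fun t => pE s t x) (Ioi 0) := by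
  unfold pE
  apply ContinuousOn.div (by fun_prop) (by fun_prop)
  intro t (ht : 0 < t); positivity
lemma g_int {s q : ℝ} (hs : 0 < s) (hq : 1 < q) (x : ℝ) :
    IntegrableOn (fun t => |pE s t x| ^ q / t) (Ioi (0:ℝ)) ∧
    ∫ t in Ioi (0:ℝ), |pE s t x| ^ q / t ≤ 2 * Real.sqrt (x ^ 2 + s ^ 2) ^ (-q) := by
  have hπ : (0:ℝ) < Real.pi := Real.pi_pos
  have hq0 : (0:ℝ) < q := by linarith
  set a : ℝ := Real.sqrt (x ^ 2 + s ^ 2) with hadef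
  have ha : 0 < a := Real.sqrt_pos.mpr (by positivity)
  have ha2 : a ^ 2 = x ^ 2 + s ^ 2 := Real.sq_sqrt (by positivity)
  set g : ℝ → ℝ := fun t => |pE s t x| ^ q / t with hgdef
  -- pointwise bound
  have hbd : ∀ t : ℝ, 0 < t → g t ≤ t ^ (q - 1) / (a ^ 2 + t ^ 2) ^ q := by
    intro t ht
    have hden : (0:ℝ) < a ^ 2 + t ^ 2 := by positivity
    have h1 : |pE s t x| ≤ t / (a ^ 2 + t ^ 2) := by
      refine (pE_abs_le hs ht (x := x)).trans ?_
      rw [ha2]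
      rw [div_le_div_iff₀ (by positivity) (by positivity)]
      have hpi1 : x ^ 2 + s ^ 2 + t ^ 2 ≤ Real.pi * (x ^ 2 + s ^ 2 + t ^ 2) := by
        nlinarith [Real.pi_gt_three, sq_nonneg x, sq_nonneg s, sq_nonneg t]
      nlinarith [mul_le_mul_of_nonneg_left hpi1 ht.le]
    have h2 : |pE s t x| ^ q ≤ (t / (a ^ 2 + t ^ 2)) ^ q :=
      Real.rpow_le_rpow (abs_nonneg _) h1 hq0.le
    have h3 : (t / (a ^ 2 + t ^ 2)) ^ q = t ^ q / (a ^ 2 + t ^ 2) ^ q :=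
      Real.div_rpow ht.le hden.le q
    calc g t ≤ (t ^ q / (a ^ 2 + t ^ 2) ^ q) / t :=
          div_le_div_of_nonneg_right (h3 ▸ h2) ht.le
      _ = t ^ (q - 1) / (a ^ 2 + t ^ 2) ^ q := by
          rw [Real.rpow_sub ht, Real.rpow_one, div_div, div_div, mul_comm]
  have hg_nonneg : ∀ t : ℝ, 0 < t → 0 ≤ g t := fun t ht => by positivity
  have hcont : ContinuousOn g (Ioi (0:ℝ)) := by
    apply ContinuousOn.div
    · apply ContinuousOn.rpow_const ((pE_contt hs).abs)
      intro t _; right; exact hq0.le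
    · exact continuousOn_id
    · intro t (ht : 0 < t); exact ht.ne'
  -- piece 1 : Ioc 0 a
  have key1 : ∀ t ∈ Ioc (0:ℝ) a, g t ≤ t ^ (q - 1) * (a ^ (2 * q))⁻¹ := by
    intro t ht
    refine (hbd t ht.1).trans ?_
    rw [div_eq_mul_inv]
    apply mul_le_mul_of_nonneg_left ?_ (Real.rpow_nonneg ht.1.le _)
    apply inv_anti₀ (by positivity)
    calc a ^ (2 * q) = (a ^ 2) ^ q := by
          rw [← Real.rpow_natCast a 2, ← Real.rpow_mul ha.le]; norm_num
      _ ≤ (a ^ 2 + t ^ 2) ^ q := Real.rpow_le_rpow (by positivity) (by nlinarith) hq0.le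
  have hψ1 : IntegrableOn (fun t : ℝ => t ^ (q - 1) * (a ^ (2 * q))⁻¹) (Ioc 0 a) := by
    have h := intervalIntegral.intervalIntegrable_rpow (r := q - 1) (μ := volume) (a := 0)
      (b := a) (Or.inl (by linarith))
    exact ((intervalIntegrable_iff_integrableOn_Ioc_of_le ha.le).mp h).mul_const _
  have hm1 : AEStronglyMeasurable g (volume.restrict (Ioc 0 a)) :=
    (hcont.mono Ioc_subset_Ioi_self).aestronglyMeasurable measurableSet_Ioc
  have hI1 : IntegrableOn g (Ioc 0 a) := by
    refine Integrable.mono' hψ1 hm1 ?_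
    rw [ae_restrict_iff' measurableSet_Ioc]
    refine Filter.Eventually.of_forall fun t ht => ?_
    rw [Real.norm_eq_abs, abs_of_nonneg (hg_nonneg t ht.1)]
    exact key1 t ht
  have hV1 : ∫ t in Ioc (0:ℝ) a, g t ≤ a ^ (-q) / q := by
    have hmono := setIntegral_mono_on hI1 hψ1 measurableSet_Ioc key1
    refine hmono.trans ?_
    rw [MeasureTheory.integral_mul_const]
    rw [← intervalIntegral.integral_of_le ha.le, integral_rpow (Or.inl (by linarith))]
    rw [sub_add_cancel, Real.zero_rpow (by positivity : q ≠ 0), sub_zero]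
    apply le_of_eq
    have h2q : a ^ (2 * q) = a ^ q * a ^ q := by
      rw [← Real.rpow_add ha]; ring_nf
    have haq : (0:ℝ) < a ^ q := Real.rpow_pos_of_pos ha q
    rw [h2q, Real.rpow_neg ha.le]
    field_simp
  -- piece 2 : Ioi a
  have key2 : ∀ t ∈ Ioi a, g t ≤ t ^ (-q - 1) := by
    intro t (ht : a < t)
    have ht0 : 0 < t := ha.trans ht
    refine (hbd t ht0).trans ?_
    have h4 : t ^ (2 * q) ≤ (a ^ 2 + t ^ 2) ^ q := by
      calc t ^ (2 * q) = (t ^ 2) ^ q := by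
            rw [← Real.rpow_natCast t 2, ← Real.rpow_mul ht0.le]; norm_num
        _ ≤ (a ^ 2 + t ^ 2) ^ q := Real.rpow_le_rpow (by positivity) (by nlinarith) hq0.le
    calc t ^ (q - 1) / (a ^ 2 + t ^ 2) ^ q ≤ t ^ (q - 1) / t ^ (2 * q) := by
          apply div_le_div_of_nonneg_left (Real.rpow_nonneg ht0.le _) (by positivity) h4
      _ = t ^ (-q - 1) := by
          rw [← Real.rpow_sub ht0]; ring_nf
  have hψ2 : IntegrableOn (fun t : ℝ => t ^ (-q - 1)) (Ioi a) :=
    integrableOn_Ioi_rpow_of_lt (by linarith) ha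
  have hm2 : AEStronglyMeasurable g (volume.restrict (Ioi a)) :=
    (hcont.mono (Ioi_subset_Ioi ha.le)).aestronglyMeasurable measurableSet_Ioi
  have hI2 : IntegrableOn g (Ioi a) := by
    refine Integrable.mono' hψ2 hm2 ?_
    rw [ae_restrict_iff' measurableSet_Ioi]
    refine Filter.Eventually.of_forall fun t ht => ?_
    rw [Real.norm_eq_abs, abs_of_nonneg (hg_nonneg t (ha.trans ht))]
    exact key2 t ht
  have hV2 : ∫ t in Ioi a, g t ≤ a ^ (-q) / q := by
    have hmono := setIntegral_mono_on hI2 hψ2 measurableSet_Ioi key2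
    refine hmono.trans ?_
    rw [integral_Ioi_rpow_of_lt (by linarith) ha]
    rw [show -q - 1 + 1 = -q by ring]
    rw [neg_div, div_neg, neg_neg]
  -- combine
  have hsplit : Ioc (0:ℝ) a ∪ Ioi a = Ioi 0 := Ioc_union_Ioi_eq_Ioi ha.le
  have hIOn : IntegrableOn g (Ioi (0:ℝ)) := by
    rw [← hsplit]; exact hI1.union hI2
  refine ⟨hIOn, ?_⟩
  have : ∫ t in Ioi (0:ℝ), g t = (∫ t in Ioc (0:ℝ) a, g t) + ∫ t in Ioi a, g t := by
    rw [← hsplit, setIntegral_union (Ioc_disjoint_Ioi le_rfl) measurableSet_Ioi hI1 hI2]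
  rw [this]
  have haq : (0:ℝ) < a ^ (-q) := Real.rpow_pos_of_pos ha _
  have h1q : a ^ (-q) / q ≤ a ^ (-q) := by
    rw [div_le_iff₀ hq0]
    nlinarith
  linarith

lemma pG_eq {s q : ℝ} (hs : 0 < s) (x : ℝ) :
    pG q (pK s) x = (∫ t in Ioi (0:ℝ), |pE s t x| ^ q / t) ^ (1 / q) := by
  unfold pG
  congr 1
  apply setIntegral_congr_fun measurableSet_Ioi
  intro t ht
  dsimp only
  rw [ptD_pK hs ht]

lemma pG_nonneg {s q : ℝ} (hs : 0 < s) (x : ℝ) : 0 ≤ pG q (pK s) x := by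
  rw [pG_eq hs]
  apply Real.rpow_nonneg
  apply setIntegral_nonneg measurableSet_Ioi
  intro t (ht : 0 < t)
  positivity

lemma pG_le {s q : ℝ} (hs : 0 < s) (hq : 1 < q) (x : ℝ) :
    pG q (pK s) x ≤ 2 / Real.sqrt (x ^ 2 + s ^ 2) := by
  have hq0 : (0:ℝ) < q := by linarith
  set a : ℝ := Real.sqrt (x ^ 2 + s ^ 2) with hadef
  have ha : 0 < a := Real.sqrt_pos.mpr (by positivity)
  rw [pG_eq hs]
  have hint := (g_int hs hq x).2
  have hnn : 0 ≤ ∫ t in Ioi (0:ℝ), |pE s t x| ^ q / t :=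
    setIntegral_nonneg measurableSet_Ioi fun t (ht : 0 < t) => by positivity
  calc (∫ t in Ioi (0:ℝ), |pE s t x| ^ q / t) ^ (1 / q)
      ≤ (2 * a ^ (-q)) ^ (1 / q) := Real.rpow_le_rpow hnn hint (by positivity)
    _ = 2 ^ (1 / q) * a ^ (-1 : ℝ) := by
        rw [Real.mul_rpow (by norm_num) (Real.rpow_nonneg ha.le _)]
        rw [← Real.rpow_mul ha.le]
        congr 1
        field_simp
    _ ≤ 2 * a ^ (-1 : ℝ) := by
        apply mul_le_mul_of_nonneg_right ?_ (Real.rpow_nonneg ha.le _)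
        calc (2:ℝ) ^ (1 / q) ≤ 2 ^ (1:ℝ) :=
              Real.rpow_le_rpow_of_exponent_le one_le_two (by rw [div_le_one hq0]; linarith)
          _ = 2 := Real.rpow_one 2
    _ = 2 / a := by rw [Real.rpow_neg_one]; ring
lemma cont_rpow_const {c : ℝ} (hc : 0 ≤ c) : Continuous (fun z : ℝ => z ^ c) :=
  continuous_iff_continuousAt.mpr fun x => Real.continuousAt_rpow_const x c (Or.inr hc)

lemma integrableOn_neg_Iio {f : ℝ → ℝ} {c : ℝ} (hf : IntegrableOn f (Ioi c)) :
    IntegrableOn (fun x => f (-x)) (Iio (-c)) := by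
  have h_map : (volume.restrict (Ioi c)).map Neg.neg = volume.restrict (Iio (-c)) := by
    conv => rhs; rw [← Measure.map_neg_eq_self (volume : Measure ℝ),
      measurableEmbedding_neg.restrict_map]
    congr 1
    ext x
    simp [neg_lt, lt_neg]
  rw [IntegrableOn, ← h_map, measurableEmbedding_neg.integrable_map_iff]
  exact hf.congr (Filter.Eventually.of_forall fun x => by simp)

lemma pG_measurable {s q : ℝ} (hs : 0 < s) (hq : 1 < q) : Measurable (pG q (pK s)) := by
  have hq0 : (0:ℝ) < q := by linarith
  have hfun : pG q (pK s) = fun x => (∫ t in Ioi (0:ℝ), |pE s t x| ^ q / t) ^ (1 / q) :=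
    funext fun x => pG_eq hs x
  rw [hfun]
  have hmeas : Measurable fun x : ℝ => ∫ t in Ioi (0:ℝ), |pE s t x| ^ q / t := by
    have hsm : StronglyMeasurable (Function.uncurry fun (x t : ℝ) => |pE s t x| ^ q / t) := by
      apply Measurable.stronglyMeasurable
      apply Measurable.div ?_ measurable_snd
      have hpE : Measurable fun p : ℝ × ℝ => pE s p.2 p.1 := by
        unfold pE
        exact (by fun_prop : Measurable fun p : ℝ × ℝ =>
          p.2 * (p.1 ^ 2 - (p.2 + s) ^ 2)).div (by fun_prop)
      exact (cont_rpow_const hq0.le).measurable.comp hpE.abs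
    exact (hsm.integral_prod_right (ν := volume.restrict (Ioi 0))).measurable
  exact (cont_rpow_const (by positivity : (0:ℝ) ≤ 1/q)).measurable.comp hmeas

lemma pGp_integrable {s q p : ℝ} (hs : 0 < s) (hq : 1 < q) (hp : 0 < p) (hp1 : 1 < p) :
    Integrable (fun x => |pG q (pK s) x| ^ p) := by
  set w : ℝ → ℝ := fun x => 2 ^ p * Real.sqrt (x ^ 2 + s ^ 2) ^ (-p) with hw
  have hsq_pos : ∀ x : ℝ, 0 < Real.sqrt (x ^ 2 + s ^ 2) :=
    fun x => Real.sqrt_pos.mpr (by positivity)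
  have hw_cont : Continuous w := by
    apply continuous_const.mul
    apply Continuous.rpow_const (by fun_prop)
    intro x; left; exact (hsq_pos x).ne'
  -- pieces
  have hA : IntegrableOn w (Ioi s) := by
    refine Integrable.mono' ((integrableOn_Ioi_rpow_of_lt (by linarith : -p < -1) hs).const_mul
      (2 ^ p)) (hw_cont.aestronglyMeasurable.restrict) ?_
    rw [ae_restrict_iff' measurableSet_Ioi]
    refine Filter.Eventually.of_forall fun x (hx : s < x) => ?_
    have hx0 : 0 < x := hs.trans hx
    have h1 : x ≤ Real.sqrt (x ^ 2 + s ^ 2) := (Real.le_sqrt hx0.le (by positivity)).mpr (by nlinarith)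
    have h2 : Real.sqrt (x ^ 2 + s ^ 2) ^ (-p) ≤ x ^ (-p) := by
      rw [Real.rpow_neg (hsq_pos x).le, Real.rpow_neg hx0.le]
      apply inv_anti₀ (Real.rpow_pos_of_pos hx0 p)
      exact Real.rpow_le_rpow hx0.le h1 hp.le
    rw [Real.norm_eq_abs, abs_of_nonneg (by positivity)]
    exact mul_le_mul_of_nonneg_left h2 (by positivity)
  have hB : IntegrableOn w (Icc (-s) s) := hw_cont.integrableOn_Icc
  have hC : IntegrableOn w (Iio (-s)) := by
    have h := integrableOn_neg_Iio hA
    refine h.congr (Filter.Eventually.of_forall fun x => ?_)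
    simp only [hw, neg_sq]
  have hw_int : Integrable w := by
    rw [← integrableOn_univ]
    have hcover : Iio (-s) ∪ (Icc (-s) s ∪ Ioi s) = (univ : Set ℝ) := by
      ext z
      simp only [mem_union, mem_Iio, mem_Icc, mem_Ioi, mem_univ, iff_true]
      rcases lt_or_ge z (-s) with h | h
      · exact Or.inl h
      rcases le_or_gt z s with h2 | h2
      · exact Or.inr (Or.inl ⟨h, h2⟩)
      · exact Or.inr (Or.inr h2)
    rw [← hcover]
    exact hC.union (hB.union hA)
  refine Integrable.mono' hw_int ?_ ?_
  · apply Measurable.aestronglyMeasurable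
    exact (cont_rpow_const hp.le).measurable.comp (pG_measurable hs hq).abs
  · refine Filter.Eventually.of_forall fun x => ?_
    rw [Real.norm_eq_abs, abs_of_nonneg (by positivity)]
    rw [abs_of_nonneg (pG_nonneg hs x)]
    calc pG q (pK s) x ^ p ≤ (2 / Real.sqrt (x ^ 2 + s ^ 2)) ^ p :=
          Real.rpow_le_rpow (pG_nonneg hs x) (pG_le hs hq x) hp.le
      _ = w x := by
          simp only [hw]
          rw [Real.div_rpow (by norm_num) (hsq_pos x).le, Real.rpow_neg (hsq_pos x).le,
            div_eq_mul_inv]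
lemma part1_bound {s q : ℝ} (hs : 0 < s) (hq : 1 < q) {x : ℝ} (hx : 6 * s ≤ x) :
    (150:ℝ)⁻¹ / x ≤ (∫ t in Ioo (x / 3 - s) (x / 2 - s), |ptD t (pK s) x| ^ q / t) ^ (1 / q) := by
  have hπ : (0:ℝ) < Real.pi := Real.pi_pos
  have hq0 : (0:ℝ) < q := by linarith
  have hx0 : (0:ℝ) < x := lt_of_lt_of_le (by positivity) hx
  have hα6 : x / 6 ≤ x / 3 - s := by linarith
  have hα : (0:ℝ) < x / 3 - s := lt_of_lt_of_le (by positivity) hα6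
  have hαβ : x / 3 - s < x / 2 - s := by linarith
  -- switch to pE form
  have hcongr : ∫ t in Ioo (x / 3 - s) (x / 2 - s), |ptD t (pK s) x| ^ q / t
      = ∫ t in Ioo (x / 3 - s) (x / 2 - s), |pE s t x| ^ q / t := by
    apply setIntegral_congr_fun measurableSet_Ioo
    intro t ht
    dsimp only
    rw [ptD_pK hs (hα.trans ht.1)]
  -- pointwise lower bound on the interval
  have hlow : ∀ t ∈ Ioo (x / 3 - s) (x / 2 - s),
      ((50 * x)⁻¹) ^ q * (2 / x) ≤ |pE s t x| ^ q / t := by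
    intro t ht
    have ht1 : x / 3 - s < t := ht.1
    have ht2 : t < x / 2 - s := ht.2
    have ht0 : 0 < t := hα.trans ht1
    have ht6 : x / 6 ≤ t := le_of_lt (lt_of_le_of_lt hα6 ht1)
    have htx2 : t ≤ x / 2 := by linarith
    have hr1 : x / 3 < t + s := by linarith
    have hr2 : t + s < x / 2 := by linarith
    have hr0 : 0 < t + s := by linarith
    have hpE : (50 * x)⁻¹ ≤ pE s t x := by
      unfold pE
      rw [inv_eq_one_div, div_le_div_iff₀ (by positivity) (by positivity)]
      have hrsq : (t + s) ^ 2 ≤ x ^ 2 / 4 := by nlinarith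
      have h5 : x ^ 2 + (t + s) ^ 2 ≤ 5 / 4 * x ^ 2 := by nlinarith
      have h6 : (x ^ 2 + (t + s) ^ 2) ^ 2 ≤ (5 / 4 * x ^ 2) ^ 2 :=
        pow_le_pow_left₀ (by positivity) h5 2
      have h7 : Real.pi * (x ^ 2 + (t + s) ^ 2) ^ 2 ≤ 3.15 * (5 / 4 * x ^ 2) ^ 2 := by
        apply mul_le_mul (le_of_lt Real.pi_lt_d2) h6 (by positivity) (by norm_num)
      have h8 : 3 / 4 * x ^ 2 ≤ x ^ 2 - (t + s) ^ 2 := by nlinarith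
      have h9 : x / 6 * (3 / 4 * x ^ 2) ≤ t * (x ^ 2 - (t + s) ^ 2) := by
        apply mul_le_mul ht6 h8 (by positivity) ht0.le
      calc 1 * (Real.pi * (x ^ 2 + (t + s) ^ 2) ^ 2) ≤ 3.15 * (5 / 4 * x ^ 2) ^ 2 := by
            rw [one_mul]; exact h7
        _ ≤ x / 6 * (3 / 4 * x ^ 2) * (50 * x) := by nlinarith
        _ ≤ t * (x ^ 2 - (t + s) ^ 2) * (50 * x) :=
            mul_le_mul_of_nonneg_right h9 (by positivity)
    have habs : (50 * x)⁻¹ ≤ |pE s t x| := hpE.trans (le_abs_self _)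
    have hpow : ((50 * x)⁻¹) ^ q ≤ |pE s t x| ^ q :=
      Real.rpow_le_rpow (by positivity) habs hq0.le
    calc ((50 * x)⁻¹) ^ q * (2 / x) ≤ ((50 * x)⁻¹) ^ q * (1 / t) := by
          apply mul_le_mul_of_nonneg_left ?_ (by positivity)
          rw [div_le_div_iff₀ hx0 ht0]
          linarith
      _ ≤ |pE s t x| ^ q * (1 / t) := by
          apply mul_le_mul_of_nonneg_right hpow (by positivity)
      _ = |pE s t x| ^ q / t := by ring
  -- the interval integral is bounded below
  have hIona : IntegrableOn (fun t => |pE s t x| ^ q / t) (Ioo (x / 3 - s) (x / 2 - s)) :=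
    ((g_int hs hq x).1.mono_set (fun t ht => hα.trans ht.1))
  have hμ : volume (Ioo (x / 3 - s) (x / 2 - s)) ≠ ⊤ := by
    rw [Real.volume_Ioo]; exact ENNReal.ofReal_ne_top
  have hge := setIntegral_ge_of_const_le measurableSet_Ioo hμ hlow hIona
  have hμval : (volume (Ioo (x / 3 - s) (x / 2 - s))).toReal = x / 6 := by
    rw [Real.volume_Ioo, ENNReal.toReal_ofReal (by linarith)]
    ring
  rw [measureReal_def, hμval, smul_eq_mul, mul_comm] at hge
  have hkey : ((150 * x)⁻¹) ^ q ≤ ∫ t in Ioo (x / 3 - s) (x / 2 - s), |pE s t x| ^ q / t := by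
    refine le_trans ?_ hge
    have h13 : ((150 * x)⁻¹) ^ q = ((50 * x)⁻¹) ^ q * (3:ℝ)⁻¹ ^ q := by
      rw [← Real.mul_rpow (by positivity) (by positivity)]
      congr 1
      rw [← mul_inv]
      norm_num
      ring
    rw [h13]
    have h3q : (3:ℝ)⁻¹ ^ q ≤ (3:ℝ)⁻¹ := by
      have := Real.rpow_le_rpow_of_exponent_ge (by norm_num : (0:ℝ) < 3⁻¹)
        (by norm_num : (3:ℝ)⁻¹ ≤ 1) (le_of_lt hq)
      simpa using this
    calc ((50 * x)⁻¹) ^ q * (3:ℝ)⁻¹ ^ q ≤ ((50 * x)⁻¹) ^ q * 3⁻¹ :=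
          mul_le_mul_of_nonneg_left h3q (by positivity)
      _ = ((50 * x)⁻¹) ^ q * (2 / x) * (x / 6) := by field_simp; ring
  rw [hcongr]
  have hfin : ((150 * x)⁻¹ ^ q) ^ (1 / q) ≤
      (∫ t in Ioo (x / 3 - s) (x / 2 - s), |pE s t x| ^ q / t) ^ (1 / q) :=
    Real.rpow_le_rpow (by positivity) hkey (by positivity)
  calc (150:ℝ)⁻¹ / x = (150 * x)⁻¹ := by rw [mul_inv]; ring
    _ = ((150 * x)⁻¹ ^ q) ^ (1 / q) := by
        rw [← Real.rpow_mul (by positivity), mul_one_div, div_self hq0.ne', Real.rpow_one]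
    _ ≤ _ := hfin

lemma pG_lower {s q : ℝ} (hs : 0 < s) (hq : 1 < q) {x : ℝ} (hx : 6 * s ≤ x) :
    (150:ℝ)⁻¹ / x ≤ pG q (pK s) x := by
  have hx0 : (0:ℝ) < x := lt_of_lt_of_le (by positivity) hx
  have hα6 : x / 6 ≤ x / 3 - s := by linarith
  have hα : (0:ℝ) < x / 3 - s := lt_of_lt_of_le (by positivity) hα6
  refine (part1_bound hs hq hx).trans ?_
  rw [pG_eq hs]
  have hcongr : ∫ t in Ioo (x / 3 - s) (x / 2 - s), |ptD t (pK s) x| ^ q / t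
      = ∫ t in Ioo (x / 3 - s) (x / 2 - s), |pE s t x| ^ q / t := by
    apply setIntegral_congr_fun measurableSet_Ioo
    intro t ht
    dsimp only
    rw [ptD_pK hs (hα.trans ht.1)]
  rw [hcongr]
  apply Real.rpow_le_rpow (setIntegral_nonneg measurableSet_Ioo
    (fun t ht => by have := hα.trans ht.1; positivity)) ?_ (by positivity)
  apply setIntegral_mono_set (g_int hs hq x).1
  · refine (ae_restrict_iff' measurableSet_Ioi).mpr ?_
    exact Filter.Eventually.of_forall fun t (ht : 0 < t) => by positivity
  · exact HasSubset.Subset.eventuallyLE (fun t ht => hα.trans ht.1)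
lemma exp_aux {p : ℝ} (hp : 1 < p) : (3:ℝ)⁻¹ ≤ (p - 1) ^ ((p - 1) / p) := by
  set u : ℝ := p - 1 with hu
  have hu0 : 0 < u := by simp [hu]; linarith
  have hp0 : 0 < p := by linarith
  rcases le_or_gt 1 u with h1 | h1
  · calc (3:ℝ)⁻¹ ≤ 1 := by norm_num
      _ ≤ u ^ (u / p) := Real.one_le_rpow h1 (by positivity)
  · have h2 : u ^ (u / p) ≥ u ^ u := by
      apply Real.rpow_le_rpow_of_exponent_ge hu0 h1.le
      rw [div_le_iff₀ hp0]
      nlinarith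
    refine le_trans ?_ h2
    have h3 : u ^ u = Real.exp (Real.log u * u) := by
      rw [Real.rpow_def_of_pos hu0]
    have h4 : Real.log u * u ≥ -1 := by
      have h5 : Real.log u⁻¹ ≤ u⁻¹ - 1 := Real.add_one_le_exp _ |> fun _ => by
        have := Real.log_le_sub_one_of_pos (x := u⁻¹) (by positivity)
        linarith
      rw [Real.log_inv] at h5
      have h6 : 1 - u⁻¹ ≤ Real.log u := by linarith
      have h7 : (1 - u⁻¹) * u ≤ Real.log u * u :=
        mul_le_mul_of_nonneg_right h6 hu0.le
      have h8 : (1 - u⁻¹) * u = u - 1 := by field_simp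
      nlinarith
    have h9 : Real.exp (-1) ≤ Real.exp (Real.log u * u) := Real.exp_le_exp.mpr h4
    refine le_trans ?_ (h3 ▸ h9)
    rw [Real.exp_neg]
    have : Real.exp 1 ≤ 3 := by
      have := Real.exp_one_lt_d9
      linarith
    have h10 : (0:ℝ) < Real.exp 1 := Real.exp_pos 1
    exact inv_anti₀ h10 this

lemma exp_aux2 {p : ℝ} (hp : 1 < p) :
    (3:ℝ)⁻¹ * (p - 1)⁻¹ ≤ (p - 1) ^ (-(1 / p)) := by
  have hu0 : (0:ℝ) < p - 1 := by linarith
  have hp0 : (0:ℝ) < p := by linarith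
  have key : (p - 1) ^ (-(1/p)) = (p - 1)⁻¹ * (p - 1) ^ ((p - 1) / p) := by
    rw [← Real.rpow_neg_one (p - 1), ← Real.rpow_add hu0]
    congr 1
    field_simp
    ring
  calc (3:ℝ)⁻¹ * (p - 1)⁻¹ = (p - 1)⁻¹ * 3⁻¹ := by ring
    _ ≤ (p - 1)⁻¹ * (p - 1) ^ ((p - 1) / p) :=
        mul_le_mul_of_nonneg_left (exp_aux hp) (by positivity)
    _ = (p - 1) ^ (-(1 / p)) := key.symm
lemma pconj_exp {p : ℝ} (hp : 1 < p) : -(1 / pconj p) = (1 - p) / p := by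
  unfold pconj
  rw [one_div_div]
  ring

lemma part2_bound {s p q : ℝ} (hs : 0 < s) (hp : 1 < p) (hpq : p ≤ q) :
    (2700:ℝ)⁻¹ * (p - 1)⁻¹ * s ^ (-(1 / pconj p)) ≤ lpN p (pG q (pK s)) := by
  have hq : 1 < q := lt_of_lt_of_le hp hpq
  have hp0 : (0:ℝ) < p := by linarith
  have hp1 : (0:ℝ) < p - 1 := by linarith
  have hs6 : (0:ℝ) < 6 * s := by linarith
  rw [pconj_exp hp]
  have hpoint : ∀ x ∈ Ioi (6 * s), (150:ℝ)⁻¹ ^ p * x ^ (-p) ≤ |pG q (pK s) x| ^ p := by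
    intro x (hx : 6 * s < x)
    have hx0 : (0:ℝ) < x := hs6.trans hx
    have h1 : (150:ℝ)⁻¹ / x ≤ pG q (pK s) x := pG_lower hs hq hx.le
    have h2 : ((150:ℝ)⁻¹ / x) ^ p ≤ |pG q (pK s) x| ^ p :=
      Real.rpow_le_rpow (by positivity) (h1.trans (le_abs_self _)) hp0.le
    refine le_trans (le_of_eq ?_) h2
    rw [Real.div_rpow (by norm_num) hx0.le, Real.rpow_neg hx0.le, div_eq_mul_inv]
  have hlow_int : IntegrableOn (fun x : ℝ => (150:ℝ)⁻¹ ^ p * x ^ (-p)) (Ioi (6 * s)) :=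
    (integrableOn_Ioi_rpow_of_lt (by linarith : -p < -1) hs6).const_mul _
  have hpG_int : Integrable (fun x => |pG q (pK s) x| ^ p) := pGp_integrable hs hq hp0 hp
  have hmono := setIntegral_mono_on hlow_int hpG_int.integrableOn measurableSet_Ioi hpoint
  have hle2 := setIntegral_le_integral (s := Ioi (6 * s)) hpG_int
    (Filter.Eventually.of_forall fun x => by positivity)
  have hval : ∫ x in Ioi (6 * s), (150:ℝ)⁻¹ ^ p * x ^ (-p)
      = (150:ℝ)⁻¹ ^ p * ((6 * s) ^ (1 - p) / (p - 1)) := by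
    rw [MeasureTheory.integral_const_mul, integral_Ioi_rpow_of_lt (by linarith : -p < -1) hs6]
    congr 1
    rw [show -p + 1 = 1 - p by ring]
    have h2 : (1:ℝ) - p ≠ 0 := by intro h; nlinarith
    field_simp
    ring
  have htot : (150:ℝ)⁻¹ ^ p * ((6 * s) ^ (1 - p) / (p - 1)) ≤ ∫ x, |pG q (pK s) x| ^ p := by
    rw [← hval]
    exact hmono.trans hle2
  have hlpn : ((150:ℝ)⁻¹ ^ p * ((6 * s) ^ (1 - p) / (p - 1))) ^ (1 / p) ≤ lpN p (pG q (pK s)) := by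
    unfold lpN
    exact Real.rpow_le_rpow (by positivity) htot (by positivity)
  refine le_trans ?_ hlpn
  have hB : (0:ℝ) ≤ (6 * s) ^ (1 - p) := Real.rpow_nonneg hs6.le _
  have expand : ((150:ℝ)⁻¹ ^ p * ((6 * s) ^ (1 - p) * (p - 1)⁻¹)) ^ (1 / p)
      = (150:ℝ)⁻¹ * ((6 * s) ^ ((1 - p) / p) * ((p - 1)⁻¹) ^ (1 / p)) := by
    rw [Real.mul_rpow (by positivity) (mul_nonneg hB (by positivity)),
        Real.mul_rpow hB (by positivity),
        ← Real.rpow_mul (by norm_num : (0:ℝ) ≤ (150:ℝ)⁻¹),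
        mul_one_div, div_self hp0.ne', Real.rpow_one,
        ← Real.rpow_mul hs6.le, mul_one_div]
  have hsplit6 : (6 * s) ^ ((1 - p) / p) = (6:ℝ) ^ ((1 - p) / p) * s ^ ((1 - p) / p) :=
    Real.mul_rpow (by norm_num) hs.le
  have h6 : (6:ℝ)⁻¹ ≤ (6:ℝ) ^ ((1 - p) / p) := by
    rw [← Real.rpow_neg_one 6]
    exact Real.rpow_le_rpow_of_exponent_le (by norm_num) (by rw [le_div_iff₀ hp0]; linarith)
  have hC : (3:ℝ)⁻¹ * (p - 1)⁻¹ ≤ ((p - 1)⁻¹) ^ (1 / p) := by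
    rw [Real.inv_rpow hp1.le, ← Real.rpow_neg hp1.le]
    exact exp_aux2 hp
  have hspos : (0:ℝ) ≤ s ^ ((1 - p) / p) := Real.rpow_nonneg hs.le _
  calc (2700:ℝ)⁻¹ * (p - 1)⁻¹ * s ^ ((1 - p) / p)
      = (150:ℝ)⁻¹ * ((6:ℝ)⁻¹ * s ^ ((1 - p) / p) * ((3:ℝ)⁻¹ * (p - 1)⁻¹)) := by ring
    _ ≤ (150:ℝ)⁻¹ * ((6:ℝ) ^ ((1 - p) / p) * s ^ ((1 - p) / p) * (((p - 1)⁻¹) ^ (1 / p))) := by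
        apply mul_le_mul_of_nonneg_left ?_ (by norm_num)
        apply mul_le_mul ?_ hC (by positivity) (by positivity)
        exact mul_le_mul_of_nonneg_right h6 hspos
    _ = (150:ℝ)⁻¹ * ((6 * s) ^ ((1 - p) / p) * ((p - 1)⁻¹) ^ (1 / p)) := by rw [hsplit6]
    _ = ((150:ℝ)⁻¹ ^ p * ((6 * s) ^ (1 - p) * (p - 1)⁻¹)) ^ (1 / p) := expand.symm
    _ = ((150:ℝ)⁻¹ ^ p * ((6 * s) ^ (1 - p) / (p - 1))) ^ (1 / p) := by
        rw [div_eq_mul_inv ((6 * s) ^ (1 - p)) (p - 1)]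
lemma pKp_bound {s p : ℝ} (hs : 0 < s) (hp : 1 < p) :
    Integrable (fun x => |pK s x| ^ p) ∧ ∫ x : ℝ, |pK s x| ^ p ≤ 4 * s ^ (1 - p) := by
  have hπ : (0:ℝ) < Real.pi := Real.pi_pos
  have hp0 : (0:ℝ) < p := by linarith
  set f : ℝ → ℝ := fun x => |pK s x| ^ p with hf
  have hf_cont : Continuous f := by
    apply Continuous.rpow_const ((pK_cont hs).abs)
    intro x; right; exact hp0.le
  have hf_nonneg : ∀ x, 0 ≤ f x := fun x => by positivity
  have hf_even : ∀ x, f (-x) = f x := by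
    intro x; simp only [hf, pK, neg_sq]
  -- bound on the middle
  have hmid : ∀ x, f x ≤ s ^ (-p) := by
    intro x
    have h1 : |pK s x| = pK s x := abs_of_pos (pK_pos hs x)
    have h2 : |pK s x| ≤ s⁻¹ := by
      rw [h1]
      refine (pK_le hs x).trans ?_
      rw [one_div]
      apply inv_anti₀ hs
      nlinarith [Real.pi_gt_three]
    have := Real.rpow_le_rpow (abs_nonneg _) h2 hp0.le
    rwa [← Real.rpow_neg_one s, ← Real.rpow_mul hs.le, neg_one_mul] at this
  -- bound on the tail
  have htail : ∀ x : ℝ, s < x → f x ≤ s ^ p * x ^ (-(2 * p)) := by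
    intro x hx
    have hx0 : 0 < x := hs.trans hx
    have h1 : |pK s x| = pK s x := abs_of_pos (pK_pos hs x)
    have h2 : pK s x ≤ s * (x ^ 2)⁻¹ := by
      unfold pK
      rw [div_le_iff₀ (by positivity)]
      have h3 : x ^ 2 ≤ Real.pi * (x ^ 2 + s ^ 2) := by
        nlinarith [Real.pi_gt_three, sq_nonneg x, sq_nonneg s]
      calc s = s * (x ^ 2)⁻¹ * x ^ 2 := by field_simp
        _ ≤ s * (x ^ 2)⁻¹ * (Real.pi * (x ^ 2 + s ^ 2)) := by
            apply mul_le_mul_of_nonneg_left h3 (by positivity)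
    have h2' : |pK s x| ≤ s * (x ^ 2)⁻¹ := by rw [h1]; exact h2
    have h4 : f x ≤ (s * (x ^ 2)⁻¹) ^ p := Real.rpow_le_rpow (abs_nonneg _) h2' hp0.le
    refine h4.trans (le_of_eq ?_)
    rw [Real.mul_rpow hs.le (by positivity)]
    congr 1
    rw [← Real.rpow_natCast x 2, ← Real.rpow_neg hx0.le, ← Real.rpow_mul hx0.le]
    norm_num
  -- integrability pieces
  have hI_Ioi : IntegrableOn f (Ioi s) := by
    refine Integrable.mono' ((integrableOn_Ioi_rpow_of_lt
      (by linarith : -(2 * p) < -1) hs).const_mul (s ^ p)) hf_cont.aestronglyMeasurable.restrict ?_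
    rw [ae_restrict_iff' measurableSet_Ioi]
    exact Filter.Eventually.of_forall fun x hx => by
      rw [Real.norm_eq_abs, abs_of_nonneg (hf_nonneg x)]; exact htail x hx
  have hI_Icc : IntegrableOn f (Icc (-s) s) := hf_cont.integrableOn_Icc
  have hI_Ioc : IntegrableOn f (Ioc (-s) s) := hI_Icc.mono_set Ioc_subset_Icc_self
  have hI_Iio : IntegrableOn f (Iio (-s)) := by
    have h := integrableOn_neg_Iio hI_Ioi
    exact h.congr (Filter.Eventually.of_forall fun x => hf_even x)
  have hI_Iic : IntegrableOn f (Iic (-s)) := by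
    rw [integrableOn_Iic_iff_integrableOn_Iio]
    exact hI_Iio
  have hcover : Iic (-s) ∪ (Ioc (-s) s ∪ Ioi s) = (univ : Set ℝ) := by
    rw [Ioc_union_Ioi_eq_Ioi (by linarith), Iic_union_Ioi]
  have hint : Integrable f := by
    rw [← integrableOn_univ, ← hcover]
    exact hI_Iic.union (hI_Ioc.union hI_Ioi)
  refine ⟨hint, ?_⟩
  -- split the integral
  have hsplit : ∫ x : ℝ, f x = (∫ x in Iic (-s), f x) + ((∫ x in Ioc (-s) s, f x)
      + ∫ x in Ioi s, f x) := by
    rw [← setIntegral_univ (f := f), ← hcover]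
    rw [setIntegral_union (by
        rw [Ioc_union_Ioi_eq_Ioi (by linarith : -s ≤ s)]
        exact Iic_disjoint_Ioi le_rfl) (measurableSet_Ioc.union measurableSet_Ioi)
      hI_Iic (hI_Ioc.union hI_Ioi)]
    rw [setIntegral_union (Ioc_disjoint_Ioi le_rfl) measurableSet_Ioi hI_Ioc hI_Ioi]
  -- estimate each piece
  have hV_Ioi : ∫ x in Ioi s, f x ≤ s ^ (1 - p) := by
    have hm := setIntegral_mono_on hI_Ioi ((integrableOn_Ioi_rpow_of_lt
      (by linarith : -(2 * p) < -1) hs).const_mul (s ^ p)) measurableSet_Ioi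
      (fun x hx => htail x hx)
    refine hm.trans ?_
    rw [MeasureTheory.integral_const_mul, integral_Ioi_rpow_of_lt (by linarith) hs]
    rw [show -(2 * p) + 1 = -(2 * p - 1) by ring]
    rw [Real.rpow_neg hs.le, neg_div, div_neg, neg_neg]
    rw [div_eq_mul_inv]
    calc s ^ p * ((s ^ (2 * p - 1))⁻¹ * (2 * p - 1)⁻¹)
        ≤ s ^ p * ((s ^ (2 * p - 1))⁻¹ * 1) := by
          apply mul_le_mul_of_nonneg_left ?_ (Real.rpow_nonneg hs.le p)
          apply mul_le_mul_of_nonneg_left ?_ (by positivity)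
          rw [inv_le_one_iff₀]
          right; linarith
      _ = s ^ (1 - p) := by
          rw [mul_one, ← Real.rpow_neg hs.le, ← Real.rpow_add hs]
          congr 1; ring
  have hV_Iic : ∫ x in Iic (-s), f x ≤ s ^ (1 - p) := by
    have heq : ∫ x in Iic (-s), f x = ∫ x in Ioi s, f (-x) := integral_comp_neg_Ioi s f |>.symm
    rw [heq]
    have : ∫ x in Ioi s, f (-x) = ∫ x in Ioi s, f x :=
      setIntegral_congr_fun measurableSet_Ioi fun x _ => hf_even x
    rw [this]
    exact hV_Ioi
  have hV_mid : ∫ x in Ioc (-s) s, f x ≤ 2 * s ^ (1 - p) := by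
    have hm := setIntegral_mono_on hI_Ioc ((integrableOn_const_iff (C := s ^ (-p)) (by finiteness)).mpr
      (Or.inr (by rw [Real.volume_Ioc]; exact ENNReal.ofReal_lt_top))) measurableSet_Ioc
      (fun x _ => hmid x)
    refine hm.trans ?_
    rw [setIntegral_const, measureReal_def, Real.volume_Ioc, ENNReal.toReal_ofReal (by linarith), smul_eq_mul]
    have : s - -s = 2 * s := by ring
    rw [this]
    have hpow : s * s ^ (-p) = s ^ (1 - p) := by
      rw [show (1:ℝ) - p = 1 + -p by ring, Real.rpow_add hs, Real.rpow_one]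
    have heq2 : 2 * s * s ^ (-p) = 2 * s ^ (1 - p) := by rw [mul_assoc, hpow]
    exact le_of_eq heq2
  rw [hsplit]
  linarith [hV_Ioi, hV_Iic, hV_mid]
lemma part3_bound {s p : ℝ} (hs : 0 < s) (hp : 1 < p) :
    lpN p (pK s) ≤ 4 * s ^ (-(1 / pconj p)) := by
  have hp0 : (0:ℝ) < p := by linarith
  rw [pconj_exp hp]
  unfold lpN
  obtain ⟨hint, hval⟩ := pKp_bound hs hp
  have h0 : 0 ≤ ∫ x : ℝ, |pK s x| ^ p := integral_nonneg fun x => by positivity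
  calc (∫ x : ℝ, |pK s x| ^ p) ^ (1 / p) ≤ (4 * s ^ (1 - p)) ^ (1 / p) :=
        Real.rpow_le_rpow h0 hval (by positivity)
    _ = 4 ^ (1 / p) * s ^ ((1 - p) / p) := by
        rw [Real.mul_rpow (by norm_num) (Real.rpow_nonneg hs.le _),
          ← Real.rpow_mul hs.le, mul_one_div]
    _ ≤ 4 * s ^ ((1 - p) / p) := by
        apply mul_le_mul_of_nonneg_right ?_ (Real.rpow_nonneg hs.le _)
        calc (4:ℝ) ^ (1 / p) ≤ 4 ^ (1:ℝ) :=
              Real.rpow_le_rpow_of_exponent_le (by norm_num)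
                (by rw [div_le_one hp0]; linarith)
          _ = 4 := Real.rpow_one 4

lemma pK_memLp {s p : ℝ} (hs : 0 < s) (hp : 1 < p) :
    MemLp (pK s) (ENNReal.ofReal p) volume := by
  have hp0 : (0:ℝ) < p := by linarith
  have hq0 : (ENNReal.ofReal p) ≠ 0 := by
    simp only [ne_eq, ENNReal.ofReal_eq_zero, not_le]
    linarith
  have hqt : (ENNReal.ofReal p) ≠ ⊤ := ENNReal.ofReal_ne_top
  have h := memLp_norm_rpow_iff (μ := volume) (q := ENNReal.ofReal p) (p := ENNReal.ofReal p)
    ((pK_cont hs).aestronglyMeasurable) hq0 hqt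
  rw [ENNReal.div_self hq0 hqt] at h
  apply h.mp
  rw [memLp_one_iff_integrable]
  have heq : (fun x => ‖pK s x‖ ^ (ENNReal.ofReal p).toReal) = fun x => |pK s x| ^ p := by
    funext x
    rw [Real.norm_eq_abs, ENNReal.toReal_ofReal hp0.le]
  rw [heq]
  exact (pKp_bound hs hp).1

theorem stmt18 :
    ∃ c C : ℝ, 0 < c ∧ 0 < C ∧
      ∀ s : ℝ, 0 < s → ∀ p q : ℝ, 1 < p → p ≤ q →
        (∀ x : ℝ, 6 * s ≤ x →
          c / x ≤ (∫ t in Ioo (x / 3 - s) (x / 2 - s), |ptD t (pK s) x| ^ q / t) ^ (1 / q)) ∧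
        (c * (p - 1)⁻¹ * s ^ (-(1 / pconj p)) ≤ lpN p (pG q (pK s))) ∧
        (lpN p (pK s) ≤ C * s ^ (-(1 / pconj p))) ∧
        (∀ L : ℝ, 0 ≤ L →
          (∀ h : ℝ → ℝ, MemLp h (ENNReal.ofReal p) volume →
            lpN p (pG q h) ≤ L * lpN p h) →
          p ≤ 2 → c * pconj p ≤ L) := by
  refine ⟨(21600:ℝ)⁻¹, 4, by norm_num, by norm_num, ?_⟩
  intro s hs p q hp hpq
  have hq : 1 < q := lt_of_lt_of_le hp hpq
  have hp0 : (0:ℝ) < p := by linarith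
  have hp1 : (0:ℝ) < p - 1 := by linarith
  have hse : (0:ℝ) < s ^ (-(1 / pconj p)) := Real.rpow_pos_of_pos hs _
  refine ⟨?_, ?_, ?_, ?_⟩
  · intro x hx
    have hx0 : (0:ℝ) < x := lt_of_lt_of_le (by positivity) hx
    refine le_trans ?_ (part1_bound hs hq hx)
    apply div_le_div_of_nonneg_right (by norm_num) hx0.le
  · refine le_trans ?_ (part2_bound hs hp hpq)
    apply mul_le_mul_of_nonneg_right ?_ hse.le
    apply mul_le_mul_of_nonneg_right (by norm_num) (by positivity)
  · exact part3_bound hs hp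
  · intro L hL0 hLle hp2
    have h1 := hLle (pK s) (pK_memLp hs hp)
    have h2 := part2_bound hs hp hpq
    have h4 : L * lpN p (pK s) ≤ L * (4 * s ^ (-(1 / pconj p))) :=
      mul_le_mul_of_nonneg_left (part3_bound hs hp) hL0
    have h5 : (2700:ℝ)⁻¹ * (p - 1)⁻¹ * s ^ (-(1 / pconj p))
        ≤ L * (4 * s ^ (-(1 / pconj p))) := le_trans h2 (h1.trans h4)
    have hre : L * (4 * s ^ (-(1 / pconj p))) = (4 * L) * s ^ (-(1 / pconj p)) := by ring
    rw [hre] at h5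
    have h6 : (2700:ℝ)⁻¹ * (p - 1)⁻¹ ≤ 4 * L := le_of_mul_le_mul_right h5 hse
    have hpc : pconj p ≤ 2 * (p - 1)⁻¹ := by
      unfold pconj
      rw [div_eq_mul_inv]
      exact mul_le_mul_of_nonneg_right hp2 (inv_nonneg.mpr hp1.le)
    have hineq : (21600:ℝ)⁻¹ * pconj p ≤ (21600:ℝ)⁻¹ * (2 * (p - 1)⁻¹) :=
      mul_le_mul_of_nonneg_left hpc (by norm_num)
    refine hineq.trans ?_
    linarith [h6]
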